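/- Let (y_k)_{k∈ℕ} be a sequence in H and let (c_k)_{k∈ℕ} be a sequence in (0,∞). Suppose that one of the following holds: (1) inf_{k∈ℕ} c_k > 0 and y_k − J_{c_k}(y_k) → 0 strongly; or (2) c_k → ∞, (y_k) is bounded, and there exists t ∈ ℕ such that y_{k+t} − J_{c_k}(y_k) → 0 strongly. Then every weak sequential cluster point of (y_k) belongs to zer A. -/

import Mathlib

open Filter InnerProductSpace

/-- `z` is a weak sequential cluster point of the sequence `y`: some subsequence of `y`
converges weakly to `z`. -/
def WSeqClusterPt {H : Type*} [NormedAddCommGroup H] [InnerProductSpace ℝ H]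
    (y : ℕ → H) (z : H) : Prop :=
  ∃ φ : ℕ → ℕ, StrictMono φ ∧
    ∀ w : H, Tendsto (fun k => ⟪y (φ k), w⟫_ℝ) atTop (nhds ⟪z, w⟫_ℝ)

/-- A convergent sequence of reals admits a uniform bound on absolute values. -/
lemma exists_bound_of_tendsto {u : ℕ → ℝ} {a : ℝ} (h : Tendsto u atTop (nhds a)) :
    ∃ C, ∀ k, |u k| ≤ C := by
  have hb : BddAbove (Set.range fun k => |u k|) := (h.abs).bddAbove_range
  obtain ⟨C, hC⟩ := hb
  exact ⟨C, fun k => hC (Set.mem_range_self k)⟩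

/-- A norm-convergent sequence in a normed group admits a uniform bound on norms. -/
lemma exists_norm_bound_of_tendsto {H : Type*} [NormedAddCommGroup H]
    {u : ℕ → H} {a : H} (h : Tendsto u atTop (nhds a)) :
    ∃ C, ∀ k, ‖u k‖ ≤ C := by
  have := exists_bound_of_tendsto (h.norm)
  simpa using this

/-- Demiclosedness of the graph of a maximally monotone operator: if `q k ∈ A (p k)`,
`q k → 0` strongly and `p k → z` weakly, then `0 ∈ A z`. -/
lemma demiclosed {H : Type*} [NormedAddCommGroup H] [InnerProductSpace ℝ H] [CompleteSpace H]
    (A : H → Set H)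
    (hmono : ∀ x y xu yv : H, xu ∈ A x → yv ∈ A y → 0 ≤ ⟪x - y, xu - yv⟫_ℝ)
    (hmax : ∀ x xu : H, (∀ y yv : H, yv ∈ A y → 0 ≤ ⟪x - y, xu - yv⟫_ℝ) → xu ∈ A x)
    (p q : ℕ → H) (z : H)
    (hmem : ∀ k, q k ∈ A (p k))
    (hq : Tendsto q atTop (nhds 0))
    (hp : ∀ w : H, Tendsto (fun k => ⟪p k, w⟫_ℝ) atTop (nhds ⟪z, w⟫_ℝ)) :
    (0 : H) ∈ A z := by
  -- the weakly convergent sequence `p` is bounded, by Banach–Steinhaus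
  obtain ⟨C, hC⟩ : ∃ C, ∀ k, ‖p k‖ ≤ C := by
    obtain ⟨C, hC⟩ := banach_steinhaus (g := fun k => innerSL ℝ (p k))
      (fun x => by
        obtain ⟨C, hC⟩ := exists_bound_of_tendsto (hp x)
        exact ⟨C, fun k => by simpa [Real.norm_eq_abs] using hC k⟩)
    refine ⟨C, fun k => ?_⟩
    simpa [innerSL_apply_norm] using hC k
  apply hmax
  intro x v hv
  have hk : ∀ k, 0 ≤ ⟪p k - x, q k - v⟫_ℝ := fun k => hmono _ _ _ _ (hmem k) hv
  -- first piece tends to 0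
  have h1 : Tendsto (fun k => ⟪p k - x, q k⟫_ℝ) atTop (nhds 0) := by
    have hbound : ∀ k, ‖⟪p k - x, q k⟫_ℝ‖ ≤ (C + ‖x‖) * ‖q k‖ := by
      intro k
      calc ‖⟪p k - x, q k⟫_ℝ‖ ≤ ‖p k - x‖ * ‖q k‖ := norm_inner_le_norm _ _
        _ ≤ (C + ‖x‖) * ‖q k‖ := by
            have : ‖p k - x‖ ≤ C + ‖x‖ :=
              (norm_sub_le _ _).trans (by gcongr; exact hC k)
            exact mul_le_mul_of_nonneg_right this (norm_nonneg _)
    have hlim : Tendsto (fun k => (C + ‖x‖) * ‖q k‖) atTop (nhds 0) := by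
      have := (hq.norm).const_mul (C + ‖x‖)
      simpa using this
    exact squeeze_zero_norm hbound hlim
  -- second piece tends to ⟪z - x, v⟫
  have h2 : Tendsto (fun k => ⟪p k - x, v⟫_ℝ) atTop (nhds ⟪z - x, v⟫_ℝ) := by
    have := (hp v).sub_const ⟪x, v⟫_ℝ
    simpa [inner_sub_left] using this
  have hlim : Tendsto (fun k => ⟪p k - x, q k - v⟫_ℝ) atTop (nhds ⟪z - x, (0 : H) - v⟫_ℝ) := by
    have := h1.sub h2
    simpa [inner_sub_right] using this
  exact ge_of_tendsto' hlim hk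

set_option maxHeartbeats 1000000 in
/-- Proposition 2.10: under either (1) `inf c_k > 0` and `y_k - J_{c_k}(y_k) → 0`, or
(2) `c_k → ∞`, `(y_k)` bounded, and `y_{k+t} - J_{c_k}(y_k) → 0` for some `t`,
every weak sequential cluster point of `(y_k)` is a zero of the maximally monotone
operator `A`. -/
theorem stmt5 {H : Type*} [NormedAddCommGroup H] [InnerProductSpace ℝ H] [CompleteSpace H]
    (A : H → Set H)
    (hmono : ∀ x y xu yv : H, xu ∈ A x → yv ∈ A y → 0 ≤ ⟪x - y, xu - yv⟫_ℝ)
    (hmax : ∀ x xu : H, (∀ y yv : H, yv ∈ A y → 0 ≤ ⟪x - y, xu - yv⟫_ℝ) → xu ∈ A x)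
    (J : ℝ → H → H)
    (hJ : ∀ c : ℝ, 0 < c → ∀ x : H, (1 / c) • (x - J c x) ∈ A (J c x))
    (y : ℕ → H) (c : ℕ → ℝ) (hc : ∀ k, 0 < c k)
    (hcase :
      ((∃ ε > (0 : ℝ), ∀ k, ε ≤ c k) ∧
        Tendsto (fun k => y k - J (c k) (y k)) atTop (nhds 0)) ∨
      (Tendsto c atTop atTop ∧ Bornology.IsBounded (Set.range y) ∧
        ∃ t : ℕ, Tendsto (fun k => y (k + t) - J (c k) (y k)) atTop (nhds 0))) :
    ∀ z : H, WSeqClusterPt y z → (0 : H) ∈ A z := by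
  rintro z ⟨φ, hφ, hweak⟩
  have hφk : ∀ k, k ≤ φ k := fun k => hφ.le_apply
  rcases hcase with ⟨⟨ε, hε, hεc⟩, h1⟩ | ⟨hct, hbdd, t, ht⟩
  · -- Case 1
    set p : ℕ → H := fun k => J (c (φ k)) (y (φ k)) with hp_def
    set q : ℕ → H := fun k => (1 / c (φ k)) • (y (φ k) - p k) with hq_def
    have hmem : ∀ k, q k ∈ A (p k) := fun k => hJ _ (hc _) _
    have hφtop : Tendsto φ atTop atTop := hφ.tendsto_atTop
    have hd : Tendsto (fun k => y (φ k) - p k) atTop (nhds 0) := h1.comp hφtop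
    have hq0 : Tendsto q atTop (nhds 0) := by
      apply squeeze_zero_norm (a := fun k => (1 / ε) * ‖y (φ k) - p k‖)
      · intro k
        rw [hq_def]
        simp only [norm_smul, Real.norm_eq_abs]
        have h1c : (0:ℝ) < c (φ k) := hc _
        rw [abs_of_pos (by positivity)]
        apply mul_le_mul_of_nonneg_right _ (norm_nonneg _)
        exact one_div_le_one_div_of_le hε (hεc _)
      · have := (hd.norm).const_mul (1 / ε)
        simpa using this
    have hpw : ∀ w : H, Tendsto (fun k => ⟪p k, w⟫_ℝ) atTop (nhds ⟪z, w⟫_ℝ) := by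
      intro w
      have hdw : Tendsto (fun k => ⟪y (φ k) - p k, w⟫_ℝ) atTop (nhds 0) := by
        have : Tendsto (fun v : H => ⟪v, w⟫_ℝ) (nhds 0) (nhds ⟪(0:H), w⟫_ℝ) :=
          (continuous_inner.comp (continuous_id.prodMk continuous_const)).continuousAt
        simpa [Function.comp_def] using this.comp hd
      have := (hweak w).sub hdw
      simpa [inner_sub_left] using this
    exact demiclosed A hmono hmax p q z hmem hq0 hpw
  · -- Case 2
    obtain ⟨M, hM⟩ := (isBounded_iff_forall_norm_le).1 hbdd
    have hMy : ∀ k, ‖y k‖ ≤ M := fun k => hM _ (Set.mem_range_self k)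
    set σ : ℕ → ℕ := fun k => φ (k + t) - t with hσ_def
    have hσt : ∀ k, σ k + t = φ (k + t) := by
      intro k
      have h1 : t ≤ φ (k + t) := le_trans (Nat.le_add_left t k) (hφk (k + t))
      show φ (k + t) - t + t = φ (k + t)
      omega
    have hσtop : Tendsto σ atTop atTop := by
      apply tendsto_atTop_mono (f := id) _ tendsto_id
      intro k
      have h1 := hφk (k + t)
      have h2 := hσt k
      simp only [id]
      omega
    set p : ℕ → H := fun k => J (c (σ k)) (y (σ k)) with hp_def
    set q : ℕ → H := fun k => (1 / c (σ k)) • (y (σ k) - p k) with hq_def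
    have hmem : ∀ k, q k ∈ A (p k) := fun k => hJ _ (hc _) _
    -- d k = y (σ k + t) - p k → 0
    have hd : Tendsto (fun k => y (σ k + t) - p k) atTop (nhds 0) := ht.comp hσtop
    obtain ⟨D, hD⟩ := exists_norm_bound_of_tendsto hd
    have hpbound : ∀ k, ‖p k‖ ≤ M + D := by
      intro k
      have : p k = y (σ k + t) - (y (σ k + t) - p k) := by abel
      rw [this]
      calc ‖y (σ k + t) - (y (σ k + t) - p k)‖ ≤ ‖y (σ k + t)‖ + ‖y (σ k + t) - p k‖ :=
            norm_sub_le _ _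
        _ ≤ M + D := add_le_add (hMy _) (hD k)
    have hq0 : Tendsto q atTop (nhds 0) := by
      apply squeeze_zero_norm (a := fun k => (2 * M + D) * (1 / c (σ k)))
      · intro k
        rw [hq_def]
        simp only [norm_smul, Real.norm_eq_abs]
        rw [abs_of_pos (one_div_pos.mpr (hc (σ k))), mul_comm]
        apply mul_le_mul_of_nonneg_right _ (le_of_lt (one_div_pos.mpr (hc (σ k))))
        calc ‖y (σ k) - p k‖ ≤ ‖y (σ k)‖ + ‖p k‖ := norm_sub_le _ _
          _ ≤ M + (M + D) := add_le_add (hMy _) (hpbound k)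
          _ = 2 * M + D := by ring
      · have hinv : Tendsto (fun k => 1 / c (σ k)) atTop (nhds 0) := by
          have := (hct.comp hσtop).inv_tendsto_atTop
          simpa [one_div, Function.comp, Function.comp_def, Pi.inv_def] using this
        have := hinv.const_mul (2 * M + D)
        simpa using this
    have hpw : ∀ w : H, Tendsto (fun k => ⟪p k, w⟫_ℝ) atTop (nhds ⟪z, w⟫_ℝ) := by
      intro w
      have hdw : Tendsto (fun k => ⟪y (σ k + t) - p k, w⟫_ℝ) atTop (nhds 0) := by
        have hcont : Tendsto (fun v : H => ⟪v, w⟫_ℝ) (nhds 0) (nhds ⟪(0:H), w⟫_ℝ) :=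
          (continuous_inner.comp (continuous_id.prodMk continuous_const)).continuousAt
        simpa [Function.comp_def] using hcont.comp hd
      have hyw : Tendsto (fun k => ⟪y (σ k + t), w⟫_ℝ) atTop (nhds ⟪z, w⟫_ℝ) := by
        have h' : Tendsto (fun k => ⟪y (φ (k + t)), w⟫_ℝ) atTop (nhds ⟪z, w⟫_ℝ) :=
          (hweak w).comp (tendsto_add_atTop_nat t)
        exact h'.congr (fun k => by rw [hσt k])
      have := hyw.sub hdw
      simpa [inner_sub_left] using this
    exact demiclosed A hmono hmax p q z hmem hq0 hpw
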